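/- Let f : ℝ≥0 → ℝ be defined by f(σ) = min(1, C·exp(-r·⌊σ/Δt⌋·Δt)) with C ≥ 0, r > 0, Δt > 0. Then f is integrable on [0,∞) and ∫₀^∞ f ≤ Δt·⌈(log max(C,1))/(r·Δt)⌉ + C·Δt/(1 - e^{-r·Δt}). -/

import Mathlib

open MeasureTheory

theorem piecewise_survival_bound_integrable (C r Δt : ℝ)
    (hC : 0 ≤ C) (hr : 0 < r) (hΔt : 0 < Δt) :
    IntegrableOn
        (fun σ : ℝ => min 1 (C * Real.exp (-r * (⌊σ / Δt⌋ : ℝ) * Δt)))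
        (Set.Ici (0 : ℝ)) volume ∧
      ∫ σ in Set.Ici (0 : ℝ),
          min 1 (C * Real.exp (-r * (⌊σ / Δt⌋ : ℝ) * Δt)) ≤
        Δt * (⌈Real.log (max C 1) / (r * Δt)⌉ : ℝ) +
          C * Δt / (1 - Real.exp (-r * Δt)) := by
  set f : ℝ → ℝ := fun σ => min 1 (C * Real.exp (-r * (⌊σ / Δt⌋ : ℝ) * Δt)) with hfdef
  have hrΔt : 0 < r * Δt := mul_pos hr hΔt
  -- measurability
  have hmeas : Measurable f := by
    apply Measurable.min measurable_const
    apply Measurable.const_mul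
    apply Real.measurable_exp.comp
    apply Measurable.mul_const
    apply Measurable.const_mul
    exact Measurable.comp measurable_from_top ((measurable_id.div_const Δt).floor)
  -- nonnegativity and pointwise bounds
  have hf_nonneg : ∀ σ : ℝ, 0 ≤ f σ :=
    fun σ => le_min zero_le_one (mul_nonneg hC (Real.exp_pos _).le)
  have hf_le_one : ∀ σ : ℝ, f σ ≤ 1 := fun σ => min_le_left _ _
  -- dominating bound : f σ ≤ C * exp (r*Δt - r*σ)
  have hf_dom : ∀ σ : ℝ, f σ ≤ C * Real.exp (r * Δt - r * σ) := by
    intro σ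
    refine (min_le_right _ _).trans ?_
    apply mul_le_mul_of_nonneg_left _ hC
    apply Real.exp_le_exp.2
    have h0 := Int.sub_one_lt_floor (σ / Δt)
    have h2 : σ / Δt * Δt = σ := div_mul_cancel₀ σ hΔt.ne'
    nlinarith [mul_lt_mul_of_pos_right h0 hΔt]
  -- integrability
  have hexpint : IntegrableOn (fun σ : ℝ => Real.exp (-r * σ)) (Set.Ici (0 : ℝ)) volume :=
    (integrableOn_Ici_iff_integrableOn_Ioi (by simp)).2 (exp_neg_integrableOn_Ioi 0 hr)
  have hint : IntegrableOn f (Set.Ici (0 : ℝ)) volume := by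
    have hg : IntegrableOn (fun σ => C * Real.exp (r * Δt - r * σ)) (Set.Ici (0 : ℝ)) volume := by
      have h := hexpint.const_mul (C * Real.exp (r * Δt))
      refine IntegrableOn.congr_fun h (fun σ _ => ?_) measurableSet_Ici
      rw [mul_assoc, ← Real.exp_add]
      ring_nf
    refine hg.mono' (hmeas.aestronglyMeasurable.restrict) ?_
    filter_upwards with σ
    rw [Real.norm_eq_abs, abs_of_nonneg (hf_nonneg σ)]
    exact hf_dom σ
  refine ⟨hint, ?_⟩
  -- the threshold
  set N : ℤ := ⌈Real.log (max C 1) / (r * Δt)⌉ with hNdef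
  have hlogmax : 0 ≤ Real.log (max C 1) := Real.log_nonneg (le_max_right _ _)
  have hN0 : 0 ≤ N := Int.ceil_nonneg (div_nonneg hlogmax hrΔt.le)
  have hN0' : (0 : ℝ) ≤ (N : ℝ) := by exact_mod_cast hN0
  have hNlog : Real.log (max C 1) ≤ (N : ℝ) * (r * Δt) := by
    have := Int.le_ceil (Real.log (max C 1) / (r * Δt))
    rw [div_le_iff₀ hrΔt] at this
    exact this
  set T : ℝ := (N : ℝ) * Δt with hTdef
  have hT0 : 0 ≤ T := mul_nonneg hN0' hΔt.le
  -- key : beyond N, the min picks the exponential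
  have key : ∀ m : ℤ, N ≤ m → C * Real.exp (-r * (m : ℝ) * Δt) ≤ 1 := by
    intro m hm
    have h1 : Real.log (max C 1) ≤ (m : ℝ) * (r * Δt) := by
      refine hNlog.trans ?_
      have : (N : ℝ) ≤ (m : ℝ) := by exact_mod_cast hm
      nlinarith
    have h2 : Real.exp (-r * (m : ℝ) * Δt) ≤ (max C 1)⁻¹ := by
      rw [← Real.exp_log (lt_of_lt_of_le one_pos (le_max_right C 1)), ← Real.exp_neg]
      apply Real.exp_le_exp.2
      nlinarith
    calc C * Real.exp (-r * (m : ℝ) * Δt) ≤ (max C 1) * (max C 1)⁻¹ := by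
          apply mul_le_mul (le_max_left _ _) h2 (Real.exp_pos _).le
          exact le_trans hC (le_max_left _ _)
      _ = 1 := mul_inv_cancel₀ (by positivity : (0:ℝ) < max C 1).ne'
  -- floor value on pieces
  have hfloor : ∀ (m : ℤ) (σ : ℝ), σ ∈ Set.Ico ((m : ℝ) * Δt) (((m : ℝ) + 1) * Δt) →
      ⌊σ / Δt⌋ = m := by
    intro m σ hσ
    rw [Int.floor_eq_iff]
    constructor
    · rw [le_div_iff₀ hΔt]; exact hσ.1
    · rw [div_lt_iff₀ hΔt]; exact hσ.2
  -- split the integral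
  have hsplit : Set.Ico (0:ℝ) T ∪ Set.Ici T = Set.Ici (0:ℝ) := Set.Ico_union_Ici_eq_Ici hT0
  have hint1 : IntegrableOn f (Set.Ico 0 T) volume :=
    hint.mono_set (by rw [← hsplit]; exact Set.subset_union_left)
  have hint2 : IntegrableOn f (Set.Ici T) volume :=
    hint.mono_set (Set.Ici_subset_Ici.2 hT0)
  have hdisj : Disjoint (Set.Ico (0:ℝ) T) (Set.Ici T) := by
    apply Set.disjoint_left.2
    intro σ hσ1 hσ2
    exact absurd hσ2 (not_le.2 hσ1.2)
  have heq : ∫ σ in Set.Ici (0:ℝ), f σ =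
      (∫ σ in Set.Ico (0:ℝ) T, f σ) + ∫ σ in Set.Ici T, f σ := by
    rw [← hsplit, setIntegral_union hdisj measurableSet_Ici hint1 hint2]
  -- bound on the initial segment
  have hbound1 : ∫ σ in Set.Ico (0:ℝ) T, f σ ≤ T := by
    have h1 : ∫ σ in Set.Ico (0:ℝ) T, f σ ≤ ∫ _ in Set.Ico (0:ℝ) T, (1:ℝ) := by
      apply setIntegral_mono_on hint1 (integrableOn_const (by
        rw [Real.volume_Ico]; exact ENNReal.ofReal_ne_top)) measurableSet_Ico
      intro σ _
      exact hf_le_one σ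
    refine h1.trans ?_
    rw [setIntegral_const, smul_eq_mul, mul_one,
      Real.volume_real_Ico_of_le (by linarith)]
    linarith
  -- tail : decompose into a union of intervals
  set s : ℕ → Set ℝ := fun k => Set.Ico (((N + k : ℤ) : ℝ) * Δt) ((((N + k : ℤ) : ℝ) + 1) * Δt)
    with hsdef
  have hsm : ∀ k, MeasurableSet (s k) := fun k => measurableSet_Ico
  have hUnion : (⋃ k, s k) = Set.Ici T := by
    ext σ
    simp only [Set.mem_iUnion, Set.mem_Ico, Set.mem_Ici, hsdef]
    constructor
    · rintro ⟨k, h1, _⟩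
      refine le_trans ?_ h1
      rw [hTdef]
      have h3 : (N : ℝ) ≤ ((N + k : ℤ) : ℝ) := by push_cast; linarith [Nat.cast_nonneg (α := ℝ) k]
      nlinarith
    · intro hσ
      have hm : N ≤ ⌊σ / Δt⌋ := by
        apply Int.le_floor.2
        rw [le_div_iff₀ hΔt]
        exact hσ
      have hcast : ((N + ((⌊σ / Δt⌋ - N).toNat : ℤ) : ℤ) : ℝ) = (⌊σ / Δt⌋ : ℝ) := by
        rw [Int.toNat_of_nonneg (by omega)]; push_cast; ring
      refine ⟨(⌊σ / Δt⌋ - N).toNat, ?_, ?_⟩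
      · rw [hcast]
        have := Int.floor_le (σ / Δt)
        rw [le_div_iff₀ hΔt] at this
        linarith
      · rw [hcast]
        have := Int.lt_floor_add_one (σ / Δt)
        rw [div_lt_iff₀ hΔt] at this
        linarith
  have haux : ∀ i j : ℕ, i < j → Disjoint (s i) (s j) := by
    intro i j hlt
    apply Set.disjoint_left.2
    intro σ hσi hσj
    simp only [hsdef, Set.mem_Ico] at hσi hσj
    have h1 : σ < (((N + i : ℤ) : ℝ) + 1) * Δt := hσi.2
    have h2 : ((N + j : ℤ) : ℝ) * Δt ≤ σ := hσj.1
    have h3 : (((N + i : ℤ) : ℝ) + 1) ≤ ((N + j : ℤ) : ℝ) := by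
      push_cast
      have : (i : ℝ) + 1 ≤ (j : ℝ) := by exact_mod_cast hlt
      linarith
    nlinarith
  have hdisj2 : Pairwise (Function.onFun Disjoint s) := by
    intro i j hij
    rcases hij.lt_or_gt with h | h
    · exact haux i j h
    · exact (haux j i h).symm
  have hintU : IntegrableOn f (⋃ k, s k) volume := by rw [hUnion]; exact hint2
  -- value of each piece
  have hpiece : ∀ k : ℕ, ∫ σ in s k, f σ =
      Δt * (C * Real.exp (-r * ((N + k : ℤ) : ℝ) * Δt)) := by
    intro k
    have hconst : ∀ σ ∈ s k, f σ = C * Real.exp (-r * ((N + k : ℤ) : ℝ) * Δt) := by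
      intro σ hσ
      have hfl : ⌊σ / Δt⌋ = N + k := hfloor _ _ hσ
      simp only [hfdef]
      rw [hfl, min_eq_right (key (N + k) (by omega))]
    rw [setIntegral_congr_fun (hsm k) hconst, setIntegral_const, smul_eq_mul,
      Real.volume_real_Ico_of_le
        (by nlinarith : ((N + k : ℤ) : ℝ) * Δt ≤ (((N + k : ℤ) : ℝ) + 1) * Δt)]
    ring_nf
  -- sum the pieces
  have hbound2 : ∫ σ in Set.Ici T, f σ ≤ C * Δt / (1 - Real.exp (-r * Δt)) := by
    have hE0 : (0:ℝ) ≤ Real.exp (-(r * Δt)) := (Real.exp_pos _).le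
    have hE1 : Real.exp (-(r * Δt)) < 1 := Real.exp_lt_one_iff.2 (by linarith)
    have hsum : ∫ σ in Set.Ici T, f σ =
        ∑' k : ℕ, Δt * (C * Real.exp (-r * ((N + k : ℤ) : ℝ) * Δt)) := by
      rw [← hUnion, MeasureTheory.integral_iUnion hsm hdisj2 hintU]
      exact tsum_congr hpiece
    rw [hsum]
    have hterm : ∀ k : ℕ, Δt * (C * Real.exp (-r * ((N + k : ℤ) : ℝ) * Δt)) =
        (Δt * C * Real.exp (-r * (N : ℝ) * Δt)) * (Real.exp (-(r * Δt))) ^ k := by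
      intro k
      have harg : (-r * ((N + k : ℤ) : ℝ) * Δt) = -r * (N : ℝ) * Δt + (k : ℕ) * -(r * Δt) := by
        push_cast; ring
      rw [harg, Real.exp_add, Real.exp_nat_mul]
      ring
    calc ∑' k : ℕ, Δt * (C * Real.exp (-r * ((N + k : ℤ) : ℝ) * Δt))
        = ∑' k : ℕ, (Δt * C * Real.exp (-r * (N : ℝ) * Δt)) * (Real.exp (-(r * Δt))) ^ k :=
          tsum_congr hterm
      _ = (Δt * C * Real.exp (-r * (N : ℝ) * Δt)) * ∑' k : ℕ, (Real.exp (-(r * Δt))) ^ k :=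
          tsum_mul_left
      _ = (Δt * C * Real.exp (-r * (N : ℝ) * Δt)) * (1 - Real.exp (-(r * Δt)))⁻¹ := by
          rw [tsum_geometric_of_lt_one hE0 hE1]
      _ ≤ C * Δt / (1 - Real.exp (-r * Δt)) := by
          rw [show (-r * Δt) = -(r * Δt) from neg_mul r Δt, div_eq_mul_inv]
          have hexpN : Real.exp (-r * (N : ℝ) * Δt) ≤ 1 := by
            apply Real.exp_le_one_iff.2
            nlinarith
          have hpos : (0:ℝ) < (1 - Real.exp (-(r * Δt)))⁻¹ := by
            apply inv_pos.2; linarith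
          have hfinal := mul_le_mul_of_nonneg_right
            (mul_le_mul_of_nonneg_left hexpN (mul_nonneg hΔt.le hC)) hpos.le
          nlinarith [hfinal]
  -- conclusion
  have hTform : Δt * (N : ℝ) = T := by rw [hTdef]; ring
  calc ∫ σ in Set.Ici (0:ℝ), f σ
      = (∫ σ in Set.Ico (0:ℝ) T, f σ) + ∫ σ in Set.Ici T, f σ := heq
    _ ≤ T + C * Δt / (1 - Real.exp (-r * Δt)) := add_le_add hbound1 hbound2
    _ = Δt * (N : ℝ) + C * Δt / (1 - Real.exp (-r * Δt)) := by rw [hTform]
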